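/- The functions u₁ and u₂ are linearly independent over ℂ: if c₁ u₁(x) + c₂ u₂(x) = 0 for all x ∈ [0,a], then c₁ = c₂ = 0. -/

import Mathlib

open MeasureTheory Set Filter

/-- The sequence X̃^(n): X̃^(0) ≡ 1; for n ≥ 1, X̃^(n)(x) = n ∫₀ˣ X̃^(n-1)(ξ) dξ
if n is even, and X̃^(n)(x) = n ∫₀ˣ X̃^(n-1)(ξ) q(ξ) dξ if n is odd. -/
noncomputable def Xtilde (q : ℝ → ℂ) : ℕ → ℝ → ℂ
  | 0 => fun _ => 1
  | n + 1 => fun x => ((n + 1 : ℕ) : ℂ) *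
      ∫ ξ in (0:ℝ)..x, Xtilde q n ξ * (if Even (n + 1) then 1 else q ξ)

/-- The sequence X^(n): X^(0) ≡ 1; for n ≥ 1, X^(n)(x) = n ∫₀ˣ X^(n-1)(ξ) q(ξ) dξ
if n is even, and X^(n)(x) = n ∫₀ˣ X^(n-1)(ξ) dξ if n is odd. -/
noncomputable def Xup (q : ℝ → ℂ) : ℕ → ℝ → ℂ
  | 0 => fun _ => 1
  | n + 1 => fun x => ((n + 1 : ℕ) : ℂ) *
      ∫ ξ in (0:ℝ)..x, Xup q n ξ * (if Even (n + 1) then q ξ else 1)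

/-- u₁(x) = Σ_{even n ≥ 0} X̃^(n)(x)/n!, written as a sum over even indices n = 2k. -/
noncomputable def u₁ (q : ℝ → ℂ) (x : ℝ) : ℂ :=
  ∑' k : ℕ, Xtilde q (2 * k) x / (Nat.factorial (2 * k) : ℂ)

/-- u₂(x) = Σ_{odd n ≥ 1} X^(n)(x)/n!, written as a sum over odd indices n = 2k+1. -/
noncomputable def u₂ (q : ℝ → ℂ) (x : ℝ) : ℂ :=
  ∑' k : ℕ, Xup q (2 * k + 1) x / (Nat.factorial (2 * k + 1) : ℂ)

lemma Xtilde_zero' (q : ℝ → ℂ) (n : ℕ) : Xtilde q (n+1) 0 = 0 := by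
  simp [Xtilde]

lemma Xup_zero (q : ℝ → ℂ) (n : ℕ) : Xup q (n+1) 0 = 0 := by
  simp [Xup]

lemma u₁_zero (q : ℝ → ℂ) : u₁ q 0 = 1 := by
  unfold u₁
  rw [tsum_eq_single 0]
  · simp [Xtilde]
  · intro k hk
    obtain ⟨m, hm⟩ : ∃ m, 2 * k = m + 1 := ⟨2*k - 1, by omega⟩
    rw [hm, Xtilde_zero']
    simp

lemma u₂_zero (q : ℝ → ℂ) : u₂ q 0 = 0 := by
  unfold u₂
  have : ∀ k : ℕ, Xup q (2*k+1) 0 / (Nat.factorial (2*k+1) : ℂ) = 0 := by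
    intro k; rw [Xup_zero]; simp
  simp only [this]
  exact tsum_zero

section Frag
variable (q : ℝ → ℂ)

lemma Xup_one (q : ℝ → ℂ) (x : ℝ) : Xup q 1 x = (x:ℂ) := by
  rw [Xup]
  simp [Xup]

lemma two_pow_le_fact (k : ℕ) : 2^k ≤ Nat.factorial (2*k+1) := by
  induction k with
  | zero => simp
  | succ k ih =>
    have h2 : 2*(k+1)+1 = (2*k+1)+1+1 := by ring
    rw [h2, Nat.factorial_succ, Nat.factorial_succ, pow_succ]
    calc 2^k * 2 ≤ Nat.factorial (2*k+1) * 2 := Nat.mul_le_mul_right 2 ih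
    _ = 2 * Nat.factorial (2*k+1) := Nat.mul_comm _ _
    _ ≤ ((2*k+1+1+1)*(2*k+1+1)) * Nat.factorial (2*k+1) :=
        Nat.mul_le_mul_right _ (by nlinarith)
    _ = (2*k+1+1+1) * ((2*k+1+1) * Nat.factorial (2*k+1)) := Nat.mul_assoc _ _ _

end Frag

lemma Xup_cont_bound (q : ℝ → ℂ) (a C : ℝ) (ha : 0 ≤ a) (hC : 1 ≤ C)
    (hq : ContinuousOn q (Set.Icc 0 a)) (hqC : ∀ ξ ∈ Set.Icc 0 a, ‖q ξ‖ ≤ C) (n : ℕ) :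
    ContinuousOn (Xup q n) (Set.Icc 0 a) ∧
      ∀ x ∈ Set.Icc 0 a, ‖Xup q n x‖ ≤ C ^ n * x ^ n := by
  induction n with
  | zero =>
    refine ⟨continuousOn_const, fun x hx => ?_⟩
    simp [Xup]
  | succ n ih =>
    have hwc : ContinuousOn (fun ξ => (if Even (n+1) then q ξ else 1 : ℂ)) (Set.Icc 0 a) := by
      by_cases he : Even (n+1) <;> simp only [he, if_true, if_false]
      · exact hq
      · exact continuousOn_const
    have hwC : ∀ ξ ∈ Set.Icc 0 a, ‖(if Even (n+1) then q ξ else 1 : ℂ)‖ ≤ C := by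
      intro ξ hξ
      by_cases he : Even (n+1) <;> simp only [he, if_true, if_false]
      · exact hqC ξ hξ
      · simpa using hC
    have hfc : ContinuousOn (fun ξ => Xup q n ξ * (if Even (n+1) then q ξ else 1)) (Set.Icc 0 a) :=
      ih.1.mul hwc
    have hXeq : Xup q (n+1) = fun x => ((n+1:ℕ):ℂ) *
        ∫ ξ in (0:ℝ)..x, Xup q n ξ * (if Even (n+1) then q ξ else 1) := rfl
    constructor
    · rw [hXeq]
      apply continuousOn_const.mul
      have hint : IntegrableOn (fun ξ => Xup q n ξ * (if Even (n+1) then q ξ else 1))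
          (Set.uIcc 0 a) volume := by
        rw [Set.uIcc_of_le ha]
        exact hfc.integrableOn_Icc
      simpa [Set.uIcc_of_le ha] using
        intervalIntegral.continuousOn_primitive_interval (a := (0:ℝ)) (b := a) hint
    · intro x hx
      obtain ⟨hx0, hxa⟩ := hx
      have hsub : Set.uIcc (0:ℝ) x ⊆ Set.Icc 0 a := by
        rw [Set.uIcc_of_le hx0]; exact Set.Icc_subset_Icc le_rfl hxa
      have hii : IntervalIntegrable (fun ξ => Xup q n ξ * (if Even (n+1) then q ξ else 1))
          volume 0 x := (hfc.mono hsub).intervalIntegrable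
      have hgi : IntervalIntegrable (fun ξ => C^(n+1) * ξ^n) volume 0 x :=
        (continuous_const.mul (continuous_pow n)).intervalIntegrable 0 x
      have hmono : (∫ ξ in (0:ℝ)..x, ‖Xup q n ξ * (if Even (n+1) then q ξ else 1)‖)
          ≤ ∫ ξ in (0:ℝ)..x, C^(n+1) * ξ^n := by
        apply intervalIntegral.integral_mono_on hx0 hii.norm hgi
        intro ξ hξ
        have hξa : ξ ∈ Set.Icc 0 a := Set.Icc_subset_Icc le_rfl hxa hξ
        calc ‖Xup q n ξ * (if Even (n+1) then q ξ else 1)‖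
            = ‖Xup q n ξ‖ * ‖(if Even (n+1) then q ξ else 1 : ℂ)‖ := norm_mul _ _
          _ ≤ (C^n * ξ^n) * C := by
              apply mul_le_mul (ih.2 ξ hξa) (hwC ξ hξa) (norm_nonneg _)
              have : (0:ℝ) ≤ ξ := hξ.1
              positivity
          _ = C^(n+1) * ξ^n := by ring
      have hval : (∫ ξ in (0:ℝ)..x, C^(n+1) * ξ^n) = C^(n+1) * (x^(n+1) / (n+1)) := by
        rw [intervalIntegral.integral_const_mul, integral_pow]
        norm_num
      rw [hXeq]
      simp only [norm_mul, Complex.norm_natCast]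
      calc ((n+1:ℕ):ℝ) * ‖∫ ξ in (0:ℝ)..x, Xup q n ξ * (if Even (n+1) then q ξ else 1)‖
          ≤ ((n+1:ℕ):ℝ) * ∫ ξ in (0:ℝ)..x, ‖Xup q n ξ * (if Even (n+1) then q ξ else 1)‖ := by
            apply mul_le_mul_of_nonneg_left _ (by positivity)
            exact intervalIntegral.norm_integral_le_integral_norm hx0
        _ ≤ ((n+1:ℕ):ℝ) * (C^(n+1) * (x^(n+1) / (n+1))) := by
            rw [← hval]
            exact mul_le_mul_of_nonneg_left hmono (by positivity)
        _ = C^(n+1) * x^(n+1) := by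
            field_simp
            push_cast; ring

/-- u₁ and u₂ are linearly independent over ℂ: if
c₁ u₁(x) + c₂ u₂(x) = 0 for all x ∈ [0,a], then c₁ = c₂ = 0. -/
theorem stmt_9 (a : ℝ) (ha : 0 < a) (q : ℝ → ℂ) (hq : ContinuousOn q (Set.Icc 0 a))
    (c₁ c₂ : ℂ) (h : ∀ x ∈ Set.Icc 0 a, c₁ * u₁ q x + c₂ * u₂ q x = 0) :
    c₁ = 0 ∧ c₂ = 0 := by
  have h0 := h 0 ⟨le_rfl, ha.le⟩
  rw [u₁_zero, u₂_zero] at h0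
  have hc₁ : c₁ = 0 := by simpa using h0
  refine ⟨hc₁, ?_⟩
  obtain ⟨M, hM⟩ := (isCompact_Icc).exists_bound_of_continuousOn hq
  set C := max 1 M with hCdef
  have hC1 : (1:ℝ) ≤ C := le_max_left _ _
  have hC0 : (0:ℝ) < C := lt_of_lt_of_le one_pos hC1
  have hqC : ∀ ξ ∈ Set.Icc 0 a, ‖q ξ‖ ≤ C := fun ξ hξ => (hM ξ hξ).trans (le_max_right _ _)
  have key := fun n => (Xup_cont_bound q a C ha.le hC1 hq hqC n).2
  set x := min a (1/(3*C^2)) with hxdef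
  have hx0 : 0 < x := lt_min ha (by positivity)
  have hxa : x ≤ a := min_le_left _ _
  have hxmem : x ∈ Set.Icc 0 a := ⟨hx0.le, hxa⟩
  have hxC : x ≤ 1/(3*C^2) := min_le_right _ _
  have hCx1 : C * x ≤ 1 := by
    have : C * x ≤ C * (1/(3*C^2)) := mul_le_mul_of_nonneg_left hxC hC0.le
    calc C * x ≤ C * (1/(3*C^2)) := this
      _ = 1/(3*C) := by field_simp
      _ ≤ 1 := by rw [div_le_one (by positivity)]; nlinarith
  have hCx0 : 0 ≤ C * x := by positivity
  -- norm bound on each term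
  have hbnd : ∀ k : ℕ, ‖Xup q (2*k+1) x / (Nat.factorial (2*k+1) : ℂ)‖
      ≤ (C*x)^(2*k+1) / 2^k := by
    intro k
    rw [norm_div]
    have hfac : ‖((Nat.factorial (2*k+1) : ℕ) : ℂ)‖ = (Nat.factorial (2*k+1) : ℝ) := by
      simp
    rw [hfac]
    have h1 : ‖Xup q (2*k+1) x‖ ≤ (C*x)^(2*k+1) := by
      rw [mul_pow]
      exact key (2*k+1) x hxmem
    have h2 : (2:ℝ)^k ≤ (Nat.factorial (2*k+1) : ℝ) := by
      exact_mod_cast two_pow_le_fact k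
    exact div_le_div₀ (by positivity) h1 (by positivity) h2
  have hbnd2 : ∀ k : ℕ, ‖Xup q (2*k+1) x / (Nat.factorial (2*k+1) : ℂ)‖
      ≤ (C*x) * (1/2)^k := by
    intro k
    refine (hbnd k).trans ?_
    have hCx2 : (C*x)^2 ≤ 1 := pow_le_one₀ hCx0 hCx1
    have hpow : (C*x)^(2*k+1) ≤ C*x := by
      calc (C*x)^(2*k+1) = (C*x) * ((C*x)^2)^k := by ring
        _ ≤ (C*x) * 1 := mul_le_mul_of_nonneg_left (pow_le_one₀ (by positivity) hCx2) hCx0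
        _ = C*x := mul_one _
    calc (C*x)^(2*k+1) / 2^k ≤ (C*x) / 2^k := by gcongr
      _ = (C*x) * (1/2)^k := by rw [div_pow, one_pow, mul_one_div]
  have hgeo : Summable (fun k : ℕ => (C*x) * (1/2:ℝ)^k) :=
    (summable_geometric_of_lt_one (by norm_num) (by norm_num)).mul_left _
  have hs : Summable (fun k : ℕ => Xup q (2*k+1) x / (Nat.factorial (2*k+1) : ℂ)) :=
    Summable.of_norm_bounded hgeo hbnd2
  have hsplit : u₂ q x = (x:ℂ) + ∑' k : ℕ,
      Xup q (2*(k+1)+1) x / (Nat.factorial (2*(k+1)+1) : ℂ) := by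
    unfold u₂
    rw [Summable.tsum_eq_zero_add hs]
    congr 1
    show Xup q (2*0+1) x / (Nat.factorial (2*0+1) : ℂ) = (x:ℂ)
    norm_num [Xup_one]
  have htail : ‖∑' k : ℕ, Xup q (2*(k+1)+1) x / (Nat.factorial (2*(k+1)+1) : ℂ)‖
      ≤ (C*x)^3 := by
    have hg : HasSum (fun k : ℕ => ((C*x)^3/2) * (1/2:ℝ)^k) ((C*x)^3) := by
      have := (hasSum_geometric_of_lt_one (r := (1/2:ℝ)) (by norm_num)
        (by norm_num)).mul_left ((C*x)^3/2)
      rw [show ((1:ℝ) - 1/2)⁻¹ = 2 by norm_num, div_mul_cancel₀ _ two_ne_zero] at this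
      exact this
    apply tsum_of_norm_bounded hg
    intro k
    refine (hbnd (k+1)).trans ?_
    have hCx2 : (C*x)^2 ≤ 1 := pow_le_one₀ hCx0 hCx1
    have hpow : (C*x)^(2*(k+1)+1) ≤ (C*x)^3 := by
      calc (C*x)^(2*(k+1)+1) = (C*x)^3 * ((C*x)^2)^k := by ring
        _ ≤ (C*x)^3 * 1 := mul_le_mul_of_nonneg_left
            (pow_le_one₀ (by positivity) hCx2) (by positivity)
        _ = (C*x)^3 := mul_one _
    calc (C*x)^(2*(k+1)+1) / 2^(k+1) ≤ (C*x)^3 / 2^(k+1) := by gcongr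
      _ = ((C*x)^3/2) * (1/2)^k := by
          rw [pow_succ]
          field_simp
          rw [pow_succ, mul_right_comm, ← mul_pow]; norm_num
  have hx3 : (C*x)^3 < x := by
    have hA : C^2 * x ≤ 1/3 := by
      have := mul_le_mul_of_nonneg_left hxC (by positivity : (0:ℝ) ≤ C^2)
      calc C^2 * x ≤ C^2 * (1/(3*C^2)) := this
        _ = 1/3 := by field_simp
    have hB : (C^2*x) * (C*x) ≤ 1/3 := by nlinarith
    nlinarith
  have hu : u₂ q x ≠ 0 := by
    intro he
    rw [hsplit] at he
    have : (x:ℂ) = -∑' k : ℕ, Xup q (2*(k+1)+1) x / (Nat.factorial (2*(k+1)+1) : ℂ) := by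
      linear_combination he
    have hnx : ‖(x:ℂ)‖ ≤ (C*x)^3 := by
      rw [this, norm_neg]; exact htail
    rw [Complex.norm_real, Real.norm_eq_abs, abs_of_pos hx0] at hnx
    linarith
  have hfin := h x hxmem
  rw [hc₁, zero_mul, zero_add] at hfin
  exact (mul_eq_zero.mp hfin).resolve_right hu
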